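/- arXiv:1312.1311 — 2 statements merged into one kernel-verified Lean document; each statement's English description precedes it below -/
import Mathlib

section
/- Let p be a prime, g an integer with p ∤ g, u_0 ∈ {1,…,p−1}, and k ≥ 1 an integer with 2^k < p. Then τ_k ≥ t·2^{k−1}/p, where t is the least eventual period of {u_n} and τ_k is the least eventual period of {ξ^{(k)}_n}. -/
open Pointwise

/-- The exponential generator sequence: `u 0 = u0` and `u (n+1)` is the representative in
`{0,…,p-1}` of `g ^ (u n) mod p` (which lies in `{1,…,p-1}` when `p ∤ g`). -/
def expSeq (p : ℕ) (g : ℤ) (u0 : ℕ) : ℕ → ℕ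
  | 0 => u0
  | n + 1 => ((g ^ expSeq p g u0 n) % (p : ℤ)).toNat

/-- `d` is the least eventual period of the sequence `f`. -/
def IsLeastPeriod (f : ℕ → ℕ) (d : ℕ) : Prop :=
  IsLeast {m : ℕ | 0 < m ∧ ∃ s : ℕ, ∀ n : ℕ, s ≤ n → f (n + m) = f n} d

/-- `s` is the least preperiod of `f` with respect to the period `t`. -/
def IsLeastPreperiod (f : ℕ → ℕ) (t s : ℕ) : Prop :=
  IsLeast {s : ℕ | ∀ n : ℕ, s ≤ n → f (n + t) = f n} s

/-- `I` is an interval of `K` consecutive integers. -/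
def IsIntervalOf (I : Finset ℤ) (K : ℕ) : Prop :=
  ∃ x : ℤ, I = Finset.Icc x (x + K - 1)

/-- `R_{a,b,g,p}(I,J)`: the number of `(u,x,y) ∈ {1,…,p-1} × I × J` with
`a·u ≡ x (mod p)` and `b·g^u ≡ y (mod p)`. -/
def Rcount (p : ℕ) (a b g : ℤ) (I J : Finset ℤ) : ℕ :=
  (((Finset.Icc 1 (p - 1)) ×ˢ I ×ˢ J).filter
    (fun w : ℕ × ℤ × ℤ =>
      (a * w.1 - w.2.1) % (p : ℤ) = 0 ∧ (b * g ^ w.1 - w.2.2) % (p : ℤ) = 0)).card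

/-- `ν_k(N)`: the number of distinct values among `f 0 mod 2^k, …, f (N-1) mod 2^k`. -/
def nuCount (f : ℕ → ℕ) (k N : ℕ) : ℕ :=
  ((Finset.range N).image (fun n => f n % 2 ^ k)).card

/-- `V_k(ω)`: the number of `n < l` with `f n mod 2^k = ω`. -/
def Vcount (f : ℕ → ℕ) (k l ω : ℕ) : ℕ :=
  ((Finset.range l).filter (fun n => f n % 2 ^ k = ω)).card

lemma expSeq_propagate (p : ℕ) (g : ℤ) (u0 : ℕ) {a b : ℕ}
    (h : expSeq p g u0 a = expSeq p g u0 b) :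
    ∀ j, expSeq p g u0 (a + j) = expSeq p g u0 (b + j) := by
  intro j
  induction j with
  | zero => simpa using h
  | succ j ih =>
      show expSeq p g u0 ((a + j) + 1) = expSeq p g u0 ((b + j) + 1)
      simp only [expSeq, ih]

lemma expSeq_ne (p : ℕ) (g : ℤ) (u0 : ℕ) {t : ℕ}
    (ht : IsLeastPeriod (expSeq p g u0) t) {n m : ℕ}
    (h1 : n < m) (h2 : m - n < t) : expSeq p g u0 n ≠ expSeq p g u0 m := by
  intro h
  have hd : (m - n) ∈ {d : ℕ | 0 < d ∧ ∃ s : ℕ, ∀ N : ℕ, s ≤ N →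
      expSeq p g u0 (N + d) = expSeq p g u0 N} := by
    refine ⟨by omega, n, ?_⟩
    intro N hN
    have h3 := expSeq_propagate p g u0 h.symm (N - n)
    have h4 := expSeq_propagate p g u0 h (N - n + (m - n))
    have e1 : m + (N - n) = N + (m - n) := by omega
    have e2 : n + (N - n) = N := by omega
    have e3 : n + (N - n + (m - n)) = N + (m - n) := by omega
    rw [e1, e2] at h3
    exact h3
  have := ht.2 hd
  omega

lemma expSeq_mem (p : ℕ) (hp : p.Prime) (g : ℤ) (hg : ¬ (p : ℤ) ∣ g)
    (u0 : ℕ) (hu0 : u0 ∈ Finset.Icc 1 (p - 1)) :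
    ∀ n, expSeq p g u0 n ∈ Finset.Icc 1 (p - 1) := by
  intro n
  cases n with
  | zero => exact hu0
  | succ n =>
      have hpprime : Prime (p : ℤ) := Nat.prime_iff_prime_int.mp hp
      have hp0 : (0:ℤ) < p := by exact_mod_cast hp.pos
      have hp2 : 2 ≤ p := hp.two_le
      simp only [expSeq, Finset.mem_Icc]
      set v : ℤ := g ^ expSeq p g u0 n with hv
      have hnd : ¬ (p : ℤ) ∣ v := fun h => hg (hpprime.dvd_of_dvd_pow h)
      have hr0 : 0 ≤ v % p := Int.emod_nonneg v (by positivity)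
      have hrp : v % p < p := Int.emod_lt_of_pos v hp0
      have hrne : v % p ≠ 0 := fun h => hnd (Int.dvd_of_emod_eq_zero h)
      omega

lemma count_residues (p k ω : ℕ) :
    ((Finset.Icc 1 (p - 1)).filter (fun v => v % 2 ^ k = ω)).card ≤ p / 2 ^ k + 1 := by
  classical
  have := Finset.card_le_card_of_injOn (f := fun v => v / 2 ^ k)
    (s := (Finset.Icc 1 (p - 1)).filter (fun v => v % 2 ^ k = ω))
    (t := Finset.range (p / 2 ^ k + 1)) ?_ ?_
  · simpa using this
  · intro v hv
    simp only [Finset.mem_coe, Finset.mem_filter, Finset.mem_Icc] at hv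
    simp only [Finset.mem_coe, Finset.mem_range]
    have : v / 2 ^ k ≤ p / 2 ^ k := Nat.div_le_div_right (by omega)
    omega
  · intro v hv w hw hvw
    simp only [Finset.coe_filter, Set.mem_setOf_eq, Finset.mem_Icc] at hv hw
    have h1 := Nat.div_add_mod v (2 ^ k)
    have h2 := Nat.div_add_mod w (2 ^ k)
    have hvw' : v / 2 ^ k = w / 2 ^ k := hvw
    rw [hv.2, hvw'] at h1
    rw [hw.2] at h2
    omega

/-- if `2^k < p` then `τ_k ≥ t·2^{k-1}/p`. -/
theorem tau_ge_trivial_bound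
    (p : ℕ) (hp : p.Prime) (g : ℤ) (hg : ¬ (p : ℤ) ∣ g)
    (u0 : ℕ) (hu0 : u0 ∈ Finset.Icc 1 (p - 1)) (k : ℕ) (hk : 1 ≤ k)
    (h2k : 2 ^ k < p)
    (t τ : ℕ) (ht : IsLeastPeriod (expSeq p g u0) t)
    (hτ : IsLeastPeriod (fun n => expSeq p g u0 n % 2 ^ k) τ) :
    (t : ℝ) * 2 ^ (k - 1) / p ≤ (τ : ℝ) := by
  classical
  set u := expSeq p g u0 with hu
  obtain ⟨⟨hτpos, sξ, hper⟩, _⟩ := hτ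
  have htpos : 0 < t := ht.1.1
  set m := (t - 1) / τ + 1 with hm
  -- all ξ values along the arithmetic progression are equal
  have hxi : ∀ i : ℕ, u (sξ + i * τ) % 2 ^ k = u sξ % 2 ^ k := by
    intro i
    induction i with
    | zero => simp
    | succ i ih =>
        have := hper (sξ + i * τ) (by omega)
        simp only at this
        have e : sξ + (i + 1) * τ = sξ + i * τ + τ := by ring
        rw [e, this, ih]
    -- done
  -- injectivity
  have hinj : Set.InjOn (fun i => u (sξ + i * τ)) (Finset.range m) := by
    intro i hi j hj hij
    simp only [Finset.coe_range, Set.mem_Iio] at hi hj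
    by_contra hne
    rcases Nat.lt_or_ge i j with hlt | hge
    · have hdiff : (sξ + j * τ) - (sξ + i * τ) = (j - i) * τ := by
        rw [Nat.sub_mul]; omega
      have hle : (j - i) * τ ≤ (m - 1) * τ := Nat.mul_le_mul_right _ (by omega)
      have hlt2 : (m - 1) * τ ≤ t - 1 := by
        have : (t - 1) / τ * τ ≤ t - 1 := Nat.div_mul_le_self _ _
        simpa [hm] using this
      exact expSeq_ne p g u0 ht (by nlinarith [Nat.one_le_iff_ne_zero.2 (by omega : j - i ≠ 0)])
        (by omega) hij
    · have hlt : j < i := by omega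
      have hle : (i - j) * τ ≤ (m - 1) * τ := Nat.mul_le_mul_right _ (by omega)
      have hlt2 : (m - 1) * τ ≤ t - 1 := by
        have : (t - 1) / τ * τ ≤ t - 1 := Nat.div_mul_le_self _ _
        simpa [hm] using this
      exact expSeq_ne p g u0 ht (show sξ + j * τ < sξ + i * τ by
          have := (Nat.mul_lt_mul_right hτpos).mpr hlt; omega)
        (by rw [show (sξ + i * τ) - (sξ + j * τ) = (i - j) * τ by rw [Nat.sub_mul]; omega]; omega)
        hij.symm
  -- m ≤ p / 2^k + 1
  have hcard : m ≤ p / 2 ^ k + 1 := by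
    have hmaps : ∀ i ∈ Finset.range m, u (sξ + i * τ) ∈
        (Finset.Icc 1 (p - 1)).filter (fun v => v % 2 ^ k = u sξ % 2 ^ k) := by
      intro i _
      simp only [Finset.mem_filter]
      exact ⟨expSeq_mem p hp g hg u0 hu0 _, hxi i⟩
    have := Finset.card_le_card_of_injOn (fun i => u (sξ + i * τ)) hmaps hinj
    calc m = (Finset.range m).card := (Finset.card_range m).symm
      _ ≤ _ := this
      _ ≤ p / 2 ^ k + 1 := count_residues p k _
  -- t ≤ m * τ
  have hmt : t ≤ m * τ := by
    have h1 := Nat.div_add_mod (t - 1) τ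
    have h2 : (t - 1) % τ < τ := Nat.mod_lt _ hτpos
    have hA : m * τ = τ * ((t - 1) / τ) + τ := by
      rw [hm, Nat.add_mul, Nat.one_mul, Nat.mul_comm]
    omega
  -- now real arithmetic
  have hp0 : (0:ℝ) < p := by exact_mod_cast hp.pos
  have h2k0 : (0:ℝ) < 2 ^ k := by positivity
  have hcastdiv : ((p / 2 ^ k : ℕ) : ℝ) ≤ (p : ℝ) / 2 ^ k := by
    have h := Nat.cast_div_le (α := ℝ) (m := p) (n := 2 ^ k)
    push_cast at h
    exact h
  have h1 : (1:ℝ) ≤ (p : ℝ) / 2 ^ k := by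
    rw [le_div_iff₀ h2k0]
    have : (2:ℝ) ^ k < p := by exact_mod_cast h2k
    linarith
  have hmR : (m : ℝ) ≤ 2 * p / 2 ^ k := by
    have : (m : ℝ) ≤ ((p / 2 ^ k : ℕ) : ℝ) + 1 := by exact_mod_cast hcard
    calc (m : ℝ) ≤ (p : ℝ) / 2 ^ k + 1 := by linarith
      _ ≤ (p : ℝ) / 2 ^ k + (p : ℝ) / 2 ^ k := by linarith
      _ = 2 * p / 2 ^ k := by ring
  have hmtR : (t : ℝ) ≤ m * τ := by exact_mod_cast hmt
  have hτ0 : (0:ℝ) ≤ τ := by positivity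
  have hkey : (t : ℝ) ≤ 2 * p / 2 ^ k * τ :=
    hmtR.trans (by apply mul_le_mul_of_nonneg_right hmR hτ0)
  have hpow : (2:ℝ) ^ k = 2 ^ (k - 1) * 2 := by
    rw [← pow_succ]
    congr 1
    omega
  rw [div_le_iff₀ hp0]
  rw [div_mul_eq_mul_div, le_div_iff₀ h2k0] at hkey
  nlinarith [hkey]
end

section
/- Let p be a prime, g an integer with p ∤ g, u_0 ∈ {1,…,p−1}, and k ≥ 1 an integer with 2^k < p. Then for every positive integer N ≤ ℓ one has ν_k(N) ≥ N·2^{k−1}/p. -/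
open Pointwise

-- determinism
lemma expSeq_det (p : ℕ) (g : ℤ) (u0 : ℕ) {i j : ℕ}
    (h : expSeq p g u0 i = expSeq p g u0 j) :
    ∀ m, expSeq p g u0 (i + m) = expSeq p g u0 (j + m) := by
  intro m
  induction m with
  | zero => simpa using h
  | succ m ih =>
    show ((g ^ expSeq p g u0 (i + m)) % (p : ℤ)).toNat = ((g ^ expSeq p g u0 (j + m)) % (p : ℤ)).toNat
    rw [ih]

lemma expSeq_lt (p : ℕ) (hp : 0 < p) (g : ℤ) (u0 : ℕ) (hu0 : u0 < p) :
    ∀ n, expSeq p g u0 n < p := by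
  intro n
  cases n with
  | zero => exact hu0
  | succ n =>
    show ((g ^ expSeq p g u0 n) % (p : ℤ)).toNat < p
    have h := Int.emod_lt_of_pos (g ^ expSeq p g u0 n) (by exact_mod_cast hp : (0:ℤ) < (p:ℤ))
    omega

lemma expSeq_inj (p : ℕ) (g : ℤ) (u0 : ℕ) (t s : ℕ)
    (ht : IsLeastPeriod (expSeq p g u0) t)
    (hs : IsLeastPreperiod (expSeq p g u0) t s) :
    Set.InjOn (expSeq p g u0) (Set.Iio (s + t)) := by
  set f := expSeq p g u0
  have key : ∀ i j : ℕ, i < j → j < s + t → f i ≠ f j := by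
    intro i j hij hjlt heq
    set d := j - i with hd
    have hdpos : 0 < d := by omega
    have hj : j = i + d := by omega
    -- f (n + d) = f n for all n ≥ i
    have hper : ∀ n, i ≤ n → f (n + d) = f n := by
      intro n hn
      have := expSeq_det p g u0 (i := j) (j := i) heq.symm (n - i)
      have h1 : j + (n - i) = n + d := by omega
      have h2 : i + (n - i) = n := by omega
      rw [h1, h2] at this
      exact this
    -- t ≤ d
    have htd : t ≤ d := ht.2 ⟨hdpos, i, hper⟩
    have htpos : 0 < t := ht.1.1
    obtain ⟨s0, hs0⟩ := ht.1.2
    have hsper : ∀ n, s ≤ n → f (n + t) = f n := hs.1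
    -- f (n + t) = f n for all n ≥ i
    have hnew : ∀ n, i ≤ n → f (n + t) = f n := by
      intro n hn
      -- choose M with n + M * d ≥ s
      set M := s
      have hMd : s ≤ n + M * d := by nlinarith
      have hA : ∀ m, f (n + m * d) = f n := by
        intro m
        induction m with
        | zero => simp
        | succ m ih =>
          have : n + (m + 1) * d = (n + m * d) + d := by ring
          rw [this, hper _ (by omega), ih]
      have hB : ∀ m, f (n + t + m * d) = f (n + t) := by
        intro m
        induction m with
        | zero => simp
        | succ m ih =>
          have : n + t + (m + 1) * d = (n + t + m * d) + d := by ring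
          rw [this, hper _ (by omega), ih]
      calc f (n + t) = f (n + t + M * d) := (hB M).symm
        _ = f (n + M * d + t) := by ring_nf
        _ = f (n + M * d) := hsper _ hMd
        _ = f n := hA M
    have hsi : s ≤ i := hs.2 hnew
    omega
  intro a ha b hb hab
  simp only [Set.mem_Iio] at ha hb
  rcases lt_trichotomy a b with h | h | h
  · exact absurd hab (key a b h hb)
  · exact h
  · exact absurd hab.symm (key b a h ha)


/-- if `2^k < p` then for every `0 < N ≤ ℓ = s + t` one has
`ν_k(N) ≥ N·2^{k-1}/p`. -/
theorem nu_ge_trivial_bound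
    (p : ℕ) (hp : p.Prime) (g : ℤ) (hg : ¬ (p : ℤ) ∣ g)
    (u0 : ℕ) (hu0 : u0 ∈ Finset.Icc 1 (p - 1)) (k : ℕ) (hk : 1 ≤ k)
    (h2k : 2 ^ k < p)
    (t s : ℕ) (ht : IsLeastPeriod (expSeq p g u0) t)
    (hs : IsLeastPreperiod (expSeq p g u0) t s) :
    ∀ N : ℕ, 0 < N → N ≤ s + t →
      (N : ℝ) * 2 ^ (k - 1) / p ≤ (nuCount (expSeq p g u0) k N : ℝ) := by
  intro N hN hNle
  set f := expSeq p g u0 with hf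
  have hppos : 0 < p := hp.pos
  have hu0lt : u0 < p := by
    rw [Finset.mem_Icc] at hu0
    have := hp.two_le
    omega
  have hflt : ∀ n, f n < p := expSeq_lt p hppos g u0 hu0lt
  have hinj : Set.InjOn f (Set.Iio (s + t)) := expSeq_inj p g u0 t s ht hs
  set ν := nuCount f k N with hν
  have hcard : N ≤ (p / 2 ^ k + 1) * ν := by
    have h := Finset.card_le_mul_card_image (s := Finset.range N)
      (f := fun n => f n % 2 ^ k) (p / 2 ^ k + 1) ?_
    · simpa [hν, nuCount] using h
    · intro b hb
      rw [← Finset.card_range (p / 2 ^ k + 1)]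
      apply Finset.card_le_card_of_injOn (f := fun n => f n / 2 ^ k)
        (t := Finset.range (p / 2 ^ k + 1))
      · intro a ha
        simp only [Finset.mem_coe, Finset.mem_range]
        have : f a / 2 ^ k ≤ p / 2 ^ k := Nat.div_le_div_right (le_of_lt (hflt a))
        omega
      · intro a ha c hc hac
        simp only [Finset.coe_filter, Set.mem_setOf_eq, Finset.mem_range] at ha hc
        have hmod : f a % 2 ^ k = f c % 2 ^ k := by rw [ha.2, hc.2]
        have hfeq : f a = f c := by
          have hac' : f a / 2 ^ k = f c / 2 ^ k := hac
          rw [← Nat.div_add_mod (f a) (2 ^ k), ← Nat.div_add_mod (f c) (2 ^ k), hac', hmod]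
        exact hinj (by simp only [Set.mem_Iio]; omega) (by simp only [Set.mem_Iio]; omega) hfeq
  -- pass to reals
  have hnat : N * 2 ^ k ≤ 2 * p * ν := by
    have h2 : p / 2 ^ k * 2 ^ k ≤ p := Nat.div_mul_le_self p (2 ^ k)
    calc N * 2 ^ k ≤ ((p / 2 ^ k + 1) * ν) * 2 ^ k := Nat.mul_le_mul_right _ hcard
      _ = (p / 2 ^ k * 2 ^ k + 2 ^ k) * ν := by ring
      _ ≤ (p + p) * ν := Nat.mul_le_mul_right _ (by omega)
      _ = 2 * p * ν := by ring
  have hR : (N : ℝ) * 2 ^ k ≤ 2 * p * ν := by exact_mod_cast hnat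
  have hAB : (2 : ℝ) ^ k = 2 ^ (k - 1) * 2 := by
    rw [← pow_succ]
    congr 1
    omega
  have hPpos : (0 : ℝ) < p := by exact_mod_cast hppos
  rw [div_le_iff₀ hPpos]
  nlinarith [hR, hAB]
end
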